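/- Let A be a countable set and for a ∈ A let δ_a ∈ ℓ^p(ℕ) be the standard basis vector. For 1 ≤ p ≤ 2 and 0 < ε, if V is a finite-dimensional subspace of ℓ^p(ℕ) such that every δ_a, a ∈ A, is within ℓ^p-distance ε of V, then dim V ≥ |A|(1 - ε²). -/

import Mathlib

open scoped ENNReal

local notation "⟪" x ", " y "⟫" => @inner ℂ _ _ x y

private lemma lp_norm_two_le' {p : ℝ≥0∞} (hp1 : 1 ≤ p) (hp2 : p ≤ 2)
    (f : lp (fun _ : ℕ => ℂ) p) :
    ‖(⟨(f : ∀ _ : ℕ, ℂ), (lp.memℓp f).of_exponent_ge hp2⟩ : lp (fun _ : ℕ => ℂ) 2)‖ ≤ ‖f‖ := by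
  haveI : Fact (1 ≤ p) := ⟨hp1⟩
  have hp0 : p ≠ 0 := by intro h; simp [h] at hp1
  have hptop : p ≠ ∞ := by intro h; rw [h] at hp2; exact (by simp : ¬ (∞:ℝ≥0∞) ≤ 2) hp2
  have hpr : 0 < p.toReal := ENNReal.toReal_pos hp0 hptop
  have hpr2 : p.toReal ≤ 2 := by
    have := ENNReal.toReal_mono (by norm_num) hp2
    simpa using this
  refine lp.norm_le_of_forall_sum_le (by norm_num) (norm_nonneg f) ?_
  intro s
  have key : ∀ i ∈ s, ‖f i‖ ^ (2:ℝ≥0∞).toReal ≤ ‖f i‖ ^ p.toReal * ‖f‖ ^ (2 - p.toReal) := by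
    intro i _
    have h1 : ‖f i‖ ≤ ‖f‖ := lp.norm_apply_le_norm hp0 f i
    have : ‖f i‖ ^ (2:ℝ) = ‖f i‖ ^ p.toReal * ‖f i‖ ^ (2 - p.toReal) := by
      rw [← Real.rpow_add' (norm_nonneg _)] <;> simp [hpr.ne']
    simp only [ENNReal.toReal_ofNat] at *
    rw [this]
    exact mul_le_mul_of_nonneg_left (Real.rpow_le_rpow (norm_nonneg _) h1 (by linarith))
      (Real.rpow_nonneg (norm_nonneg _) _)
  calc ∑ i ∈ s, ‖f i‖ ^ (2:ℝ≥0∞).toReal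
      ≤ ∑ i ∈ s, ‖f i‖ ^ p.toReal * ‖f‖ ^ (2 - p.toReal) := Finset.sum_le_sum key
    _ = (∑ i ∈ s, ‖f i‖ ^ p.toReal) * ‖f‖ ^ (2 - p.toReal) := (Finset.sum_mul ..).symm
    _ ≤ ‖f‖ ^ p.toReal * ‖f‖ ^ (2 - p.toReal) :=
        mul_le_mul_of_nonneg_right (lp.sum_rpow_le_norm_rpow hpr f s)
          (Real.rpow_nonneg (norm_nonneg _) _)
    _ = ‖f‖ ^ (2:ℝ≥0∞).toReal := by
        rw [← Real.rpow_add' (norm_nonneg _)] <;> simp [hpr.ne']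

/-- Parseval for a finite orthonormal basis. -/
private lemma parseval_finite {F : Type*} [NormedAddCommGroup F] [InnerProductSpace ℂ F]
    {ι : Type*} [Fintype ι] (b : OrthonormalBasis ι ℂ F) (x : F) :
    ‖x‖ ^ 2 = ∑ i, ‖⟪b i, x⟫‖ ^ 2 := by
  rw [← b.repr.norm_map x, EuclideanSpace.norm_eq, Real.sq_sqrt (by positivity)]
  refine Finset.sum_congr rfl fun i _ => ?_
  rw [b.repr_apply_apply]

set_option maxHeartbeats 1000000 in
theorem lp_basis_eps_contained_dim_lower_bound
    {p : ℝ≥0∞} (hp1 : 1 ≤ p) (hp2 : p ≤ 2)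
    (A : Finset ℕ)
    (V : Submodule ℂ (lp (fun _ : ℕ => ℂ) p)) [FiniteDimensional ℂ V]
    {ε : ℝ} (hε : 0 < ε)
    (hcont : ∀ a ∈ A, ∃ v ∈ V, ‖lp.single p a (1 : ℂ) - v‖ ≤ ε) :
    (A.card : ℝ) * (1 - ε ^ 2) ≤ (Module.finrank ℂ V : ℝ) := by
  classical
  haveI : Fact (1 ≤ p) := ⟨hp1⟩
  -- the norm-nonincreasing inclusion of ℓᵖ into ℓ²
  let incl : lp (fun _ : ℕ => ℂ) p →ₗ[ℂ] lp (fun _ : ℕ => ℂ) 2 :=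
    { toFun := fun f => ⟨(f : ∀ _ : ℕ, ℂ), (lp.memℓp f).of_exponent_ge hp2⟩
      map_add' := fun f g => rfl
      map_smul' := fun c f => rfl }
  let W : Submodule ℂ (lp (fun _ : ℕ => ℂ) 2) := V.map incl
  haveI : FiniteDimensional ℂ W := Module.Finite.map V incl
  haveI : CompleteSpace W := FiniteDimensional.complete ℂ W
  -- the orthonormal family of standard basis vectors in ℓ²
  let e : ℕ → lp (fun _ : ℕ => ℂ) 2 := fun a => lp.single 2 a (1 : ℂ)
  have he : Orthonormal ℂ e := by
    rw [orthonormal_iff_ite]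
    intro i j
    rw [lp.inner_single_left]
    simp only [RCLike.inner_apply, map_one, one_mul, e, lp.single_apply]
    by_cases h : i = j <;> simp [h, eq_comm]
  let b := stdOrthonormalBasis ℂ W
  set d := Module.finrank ℂ W with hd
  have key : ∀ a ∈ A, (1 : ℝ) - ε ^ 2 ≤ ∑ i : Fin d, ‖⟪(b i : lp (fun _ : ℕ => ℂ) 2), e a⟫‖ ^ 2 := by
    intro a ha
    obtain ⟨v, hv, hnorm⟩ := hcont a ha
    have hw : incl v ∈ W := ⟨v, hv, rfl⟩
    have h2 : ‖e a - incl v‖ ≤ ε := by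
      have heq : e a - incl v = incl (lp.single p a 1 - v) := by
        apply Subtype.ext
        rfl
      rw [heq]
      exact (lp_norm_two_le' hp1 hp2 _).trans hnorm
    have hmin : ‖e a - (W.orthogonalProjectionOnto (e a) : lp (fun _ : ℕ => ℂ) 2)‖ ≤ ε := by
      rw [← Submodule.starProjection_apply, Submodule.starProjection_minimal]
      refine le_trans (ciInf_le ⟨0, ?_⟩ (⟨incl v, hw⟩ : W)) h2
      rintro _ ⟨x, rfl⟩
      exact norm_nonneg _
    have hea : ‖e a‖ = 1 := he.1 a
    have hpyth := Submodule.norm_sq_eq_add_norm_sq_projection (e a) W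
    rw [hea] at hpyth
    have horth : ‖(Wᗮ.orthogonalProjectionOnto (e a) : lp (fun _ : ℕ => ℂ) 2)‖ ≤ ε := by
      rw [← Submodule.starProjection_apply, Submodule.starProjection_orthogonal_val]
      exact hmin
    have hP : (1 : ℝ) - ε ^ 2 ≤ ‖W.orthogonalProjectionOnto (e a)‖ ^ 2 := by
      have : ‖Wᗮ.orthogonalProjectionOnto (e a)‖ ^ 2 ≤ ε ^ 2 := by
        have h0 : ‖(Wᗮ.orthogonalProjectionOnto (e a) : lp (fun _ : ℕ => ℂ) 2)‖
            = ‖Wᗮ.orthogonalProjectionOnto (e a)‖ := rfl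
        rw [← h0]
        exact pow_le_pow_left₀ (norm_nonneg _) horth 2
      nlinarith
    refine hP.trans ?_
    rw [parseval_finite b (W.orthogonalProjectionOnto (e a))]
    apply le_of_eq
    refine Finset.sum_congr rfl fun i _ => ?_
    congr 1
    rw [Submodule.inner_orthogonalProjectionOnto_eq_of_mem_left]
  have bessel : ∀ i : Fin d, ∑ a ∈ A, ‖⟪(b i : lp (fun _ : ℕ => ℂ) 2), e a⟫‖ ^ 2 ≤ 1 := by
    intro i
    have hb1 : ‖((b i) : lp (fun _ : ℕ => ℂ) 2)‖ = 1 := b.orthonormal.1 i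
    have h := he.sum_inner_products_le (s := A) ((b i : lp (fun _ : ℕ => ℂ) 2))
    rw [hb1, one_pow] at h
    refine le_trans (le_of_eq ?_) h
    exact Finset.sum_congr rfl fun a _ => by rw [norm_inner_symm]
  calc (A.card : ℝ) * (1 - ε ^ 2)
      = ∑ _a ∈ A, (1 - ε ^ 2) := by rw [Finset.sum_const, nsmul_eq_mul]
    _ ≤ ∑ a ∈ A, ∑ i : Fin d, ‖⟪(b i : lp (fun _ : ℕ => ℂ) 2), e a⟫‖ ^ 2 :=
        Finset.sum_le_sum key
    _ = ∑ i : Fin d, ∑ a ∈ A, ‖⟪(b i : lp (fun _ : ℕ => ℂ) 2), e a⟫‖ ^ 2 := Finset.sum_comm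
    _ ≤ ∑ _i : Fin d, (1 : ℝ) := Finset.sum_le_sum fun i _ => bessel i
    _ = (d : ℝ) := by simp
    _ ≤ (Module.finrank ℂ V : ℝ) := by
        exact_mod_cast Nat.cast_le.mpr (Submodule.finrank_map_le incl V)
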